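/- Let p₃ > 0 satisfy p₃ = 2 tanh p₃, and define W₃²(p) = (9 sinh p − 12 p cosh p + sinh(3p))/(24 (p cosh p − sinh p)^{3/2}) for p > 0. Then W₃²(p₃) = (sinh² p₃ − 3)/(6√(sinh p₃)) and W₃²(p₃) > 1/√π. -/

import Mathlib

open Real Set Filter Topology

noncomputable def W32 (p : ℝ) : ℝ :=
  (9 * Real.sinh p - 12 * p * Real.cosh p + Real.sinh (3 * p)) /
    (24 * (p * Real.cosh p - Real.sinh p) ^ ((3:ℝ)/2))

noncomputable def G (p : ℝ) : ℝ := 2 * Real.sinh p - p * Real.cosh p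

lemma G_deriv : deriv G = fun p => Real.cosh p - p * Real.sinh p := by
  funext p
  unfold G
  rw [deriv_fun_sub, deriv_const_mul, Real.deriv_sinh, deriv_fun_mul, Real.deriv_cosh, deriv_id'']
  · ring
  · exact differentiable_id.differentiableAt
  · exact Real.differentiable_cosh.differentiableAt
  · exact Real.differentiable_sinh.differentiableAt
  · exact (Real.differentiable_sinh.const_mul 2).differentiableAt
  · exact (differentiable_id.mul Real.differentiable_cosh).differentiableAt

lemma G_deriv2 (p : ℝ) : deriv^[2] G p = -p * Real.cosh p := by
  rw [Function.iterate_succ, Function.iterate_one, Function.comp_apply, G_deriv]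
  rw [deriv_fun_sub, Real.deriv_cosh, deriv_fun_mul, Real.deriv_sinh, deriv_id'']
  · ring
  · exact differentiable_id.differentiableAt
  · exact Real.differentiable_sinh.differentiableAt
  · exact Real.differentiable_cosh.differentiableAt
  · exact (differentiable_id.mul Real.differentiable_sinh).differentiableAt

lemma G_strictConcave : StrictConcaveOn ℝ (Ici (0:ℝ)) G := by
  apply strictConcaveOn_of_deriv2_neg (convex_Ici 0)
  · exact ((continuous_const.mul Real.continuous_sinh).sub
      (continuous_id.mul Real.continuous_cosh)).continuousOn
  · intro x hx
    rw [interior_Ici, mem_Ioi] at hx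
    rw [G_deriv2]
    have := Real.cosh_pos x
    nlinarith

lemma exp_185_gt : Real.exp 1.85 > 6.28 := by
  have h2 : Real.exp 2 > 7.389 := by
    have := Real.exp_one_gt_d9
    calc Real.exp 2 = Real.exp 1 * Real.exp 1 := by rw [← Real.exp_add]; norm_num
    _ > 7.389 := by nlinarith
  have h15 : Real.exp (-0.15) ≥ 0.85 := by
    have := Real.add_one_le_exp (-0.15 : ℝ)
    linarith
  have : Real.exp 1.85 = Real.exp 2 * Real.exp (-0.15) := by
    rw [← Real.exp_add]; norm_num
  rw [this]
  nlinarith [Real.exp_pos (-0.15 : ℝ)]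

lemma G_185_pos : 0 < G 1.85 := by
  unfold G
  rw [Real.sinh_eq, Real.cosh_eq]
  have he : Real.exp 1.85 > 6.28 := exp_185_gt
  have hn : Real.exp (-1.85) < 0.16 := by
    rw [Real.exp_neg]
    rw [inv_lt_comm₀ (by positivity) (by norm_num)]
    linarith
  have hnp : 0 < Real.exp (-1.85) := Real.exp_pos _
  nlinarith

lemma p3_gt (p₃ : ℝ) (hp : 0 < p₃) (hG : G p₃ = 0) : 1.85 < p₃ := by
  by_contra h
  push_neg at h
  rcases eq_or_lt_of_le h with h | h
  · rw [h] at hG; linarith [G_185_pos]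
  · have hG0 : G 0 = 0 := by unfold G; simp
    have hc := G_strictConcave.2 (mem_Ici.2 (le_refl (0:ℝ)))
      (show (1.85:ℝ) ∈ Ici (0:ℝ) by norm_num) (show (0:ℝ) ≠ 1.85 by norm_num)
      (show (0:ℝ) < 1 - p₃ / 1.85 by rw [sub_pos, div_lt_one (by norm_num : (0:ℝ) < 1.85)]; exact h) (show (0:ℝ) < p₃ / 1.85 by positivity)
      (show (1 - p₃ / 1.85) + p₃ / 1.85 = 1 by ring)
    simp only [smul_eq_mul, hG0, mul_zero, zero_add] at hc
    have he : p₃ / 1.85 * 1.85 = p₃ := by ring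
    rw [he, hG] at hc
    have hpos : (0:ℝ) < p₃ / 1.85 := by positivity
    nlinarith [G_185_pos]

/-- If `p₃ > 0` satisfies `p₃ = 2 tanh p₃`, then
`W₃²(p₃) = (sinh² p₃ − 3)/(6√(sinh p₃))` and `W₃²(p₃) > 1/√π`. -/
theorem W32_at_root (p₃ : ℝ) (hp : 0 < p₃) (hroot : p₃ = 2 * Real.tanh p₃) :
    W32 p₃ = (Real.sinh p₃ ^ 2 - 3) / (6 * Real.sqrt (Real.sinh p₃)) ∧
    1 / Real.sqrt π < W32 p₃ := by
  have hc := Real.cosh_pos p₃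
  have hs : 0 < Real.sinh p₃ := Real.sinh_pos_iff.2 hp
  have hkey : p₃ * Real.cosh p₃ = 2 * Real.sinh p₃ := by
    rw [Real.tanh_eq_sinh_div_cosh] at hroot
    field_simp at hroot
    linarith
  set s := Real.sinh p₃ with hsdef
  have hsq : 0 < Real.sqrt s := Real.sqrt_pos.2 hs
  have hW : W32 p₃ = (s ^ 2 - 3) / (6 * Real.sqrt s) := by
    unfold W32
    rw [Real.sinh_three_mul]
    have hd : p₃ * Real.cosh p₃ - Real.sinh p₃ = s := by rw [← hsdef]; linarith
    rw [hd]
    have hrw : s ^ ((3:ℝ)/2) = s * Real.sqrt s := by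
      rw [show (3:ℝ)/2 = 1 + 1/2 by norm_num, Real.rpow_add hs, Real.rpow_one,
        Real.sqrt_eq_rpow]
    rw [hrw]
    have hnum : 9 * s - 12 * p₃ * Real.cosh p₃ + (4 * s ^ 3 + 3 * s)
        = 4 * s * (s ^ 2 - 3) := by nlinarith [hkey]
    rw [hnum]
    have hden : 24 * (s * Real.sqrt s) = 4 * s * (6 * Real.sqrt s) := by ring
    rw [hden]
    rw [mul_div_mul_left _ _ (by positivity)]
  refine ⟨hW, ?_⟩
  rw [hW]
  -- need s > 3.03
  have hp185 : 1.85 < p₃ := by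
    apply p3_gt p₃ hp
    unfold G; linarith
  have hs303 : 3.03 < s := by
    have h1 : Real.sinh 1.85 < s := Real.sinh_lt_sinh.2 hp185
    have h2 : (3.03:ℝ) < Real.sinh 1.85 := by
      rw [Real.sinh_eq]
      have he : Real.exp 1.85 > 6.28 := exp_185_gt
      have hn : Real.exp (-1.85) < 0.16 := by
        rw [Real.exp_neg, inv_lt_comm₀ (by positivity) (by norm_num)]
        linarith
      linarith
    linarith
  have hpi : 0 < Real.sqrt π := Real.sqrt_pos.2 Real.pi_pos
  rw [div_lt_div_iff₀ hpi (by positivity)]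
  have key : 6 * Real.sqrt s < Real.sqrt π * (s ^ 2 - 3) := by
    have h1 : (6 * Real.sqrt s) ^ 2 < (Real.sqrt π * (s ^ 2 - 3)) ^ 2 := by
      rw [mul_pow, mul_pow, Real.sq_sqrt hs.le, Real.sq_sqrt Real.pi_pos.le]
      have hpi6 := Real.pi_gt_d6
      nlinarith [mul_pos (sub_pos.2 hs303) (sub_pos.2 hs303), sq_nonneg (s - 3.03), sq_nonneg (s*s - 9.18)]
    exact lt_of_pow_lt_pow_left₀ 2 (mul_nonneg hpi.le (by nlinarith)) h1
  linarith
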